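/- arXiv:2103.14159 — 2 statements merged into one kernel-verified Lean document; each statement's English description precedes it below -/
import Mathlib

section
/- Let 𝒜 be an abelian category and 𝒯 a preenveloping full subcategory. Then Sub(𝒯) is a reflective subcategory of 𝒜, i.e. the inclusion Sub(𝒯) → 𝒜 has a left adjoint. -/
/-!
Common definitions for formalizing results of "Tilting preenvelopes and cotilting
precovers in general Abelian categories" (Parra–Saorín–Virili).

Conventions:
* Full subcategories of an abelian category `C` are encoded as `Set C`.
* "Sets" (index sets of families, coproducts, …) are encoded as types in the universe `v`
  of the morphisms of `C`.
* `Ext¹(X,Y) = 0` is encoded via the splitting of all short exact sequences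
  `0 → Y → E → X → 0` (equivalently, the vanishing of the Yoneda Ext group).
* Relative (`…In B`) notions encode the corresponding notion computed inside the
  full (abelian exact) subcategory determined by `B : Set C`; the ambient case is
  `B = Set.univ`.
* Coproducts are not assumed to exist: a coproduct of a family existing in the
  (sub)category is encoded by a cocone with the universal property (`IsCoproductIn`).
-/

open CategoryTheory CategoryTheory.Limits

universe w v u

attribute [local instance] CategoryTheory.Abelian.hasFiniteBiproducts

namespace Paper

variable {C : Type u} [Category.{v} C] [Abelian C]

/-- `(i, p)` is a short exact sequence `0 ⟶ A ⟶ E ⟶ B ⟶ 0` in `C`. -/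
def IsShortExact {A E B : C} (i : A ⟶ E) (p : E ⟶ B) : Prop :=
  ∃ hw : i ≫ p = 0, (ShortComplex.mk i p hw).ShortExact

/-- `Q`, together with the injections `ι`, is the coproduct of the family `f`
inside the full subcategory determined by `B`. -/
structure IsCoproductIn (B : Set C) {I : Type v} (f : I → C) (Q : C)
    (ι : ∀ i, f i ⟶ Q) : Prop where
  mem : ∀ i, f i ∈ B
  memQ : Q ∈ B
  desc : ∀ Z ∈ B, ∀ g : (∀ i, f i ⟶ Z), ∃! h : Q ⟶ Z, ∀ i, ι i ≫ h = g i

/-- `Ext¹(X, Y) = 0`, computed in the full subcategory determined by `B`: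
every short exact sequence `0 → Y → E → X → 0` with `E ∈ B` splits. -/
def Ext1ZeroIn (B : Set C) (X Y : C) : Prop :=
  ∀ E ∈ B, ∀ (i : Y ⟶ E) (p : E ⟶ X), IsShortExact i p → ∃ r : E ⟶ Y, i ≫ r = 𝟙 Y

/-- `Ext¹(X, Y) = 0` in the ambient abelian category. -/
def Ext1Zero (X Y : C) : Prop := Ext1ZeroIn Set.univ X Y

/-- `V^{⊥₁}`, computed in (the full subcategory determined by) `B`. -/
def rightPerp (B : Set C) (V : C) : Set C := {A ∈ B | Ext1ZeroIn B V A}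

/-- `^{⊥₁}T`, computed in `B`. -/
def leftPerpSet (B T : Set C) : Set C := {A ∈ B | ∀ X ∈ T, Ext1ZeroIn B A X}

/-- `T^{⊥₁}`, computed in `B`. -/
def rightPerpSet (B T : Set C) : Set C := {A ∈ B | ∀ X ∈ T, Ext1ZeroIn B X A}

/-- `Sub(X)` relative to `B`: objects of `B` admitting a monomorphism into an object of `X`. -/
def subIn (B X : Set C) : Set C := {A ∈ B | ∃ T ∈ X, ∃ f : A ⟶ T, Mono f}

/-- `Quot(X)` relative to `B`: objects of `B` which are epimorphic images of objects of `X`. -/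
def quotIn (B X : Set C) : Set C := {A ∈ B | ∃ T ∈ X, ∃ f : T ⟶ A, Epi f}

/-- `(T, F)` is a torsion pair in (the full subcategory determined by) `B`. -/
structure IsTorsionPairIn (B T F : Set C) : Prop where
  eqF : F = {A ∈ B | ∀ X ∈ T, ∀ f : X ⟶ A, f = 0}
  eqT : T = {A ∈ B | ∀ Y ∈ F, ∀ f : A ⟶ Y, f = 0}
  seq : ∀ A ∈ B, ∃ (X Y : C) (i : X ⟶ A) (p : A ⟶ Y), X ∈ T ∧ Y ∈ F ∧ IsShortExact i p

/-- `T` is a torsion class in `B`. -/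
def IsTorsionClassIn (B T : Set C) : Prop := ∃ F, IsTorsionPairIn B T F

/-- `F` is a torsion-free class in `B`. -/
def IsTorsionFreeClassIn (B F : Set C) : Prop := ∃ T, IsTorsionPairIn B T F

/-- `φ : M ⟶ X` is a `T`-preenvelope. -/
structure IsPreenvelope (T : Set C) {M X : C} (φ : M ⟶ X) : Prop where
  mem : X ∈ T
  fac : ∀ T' ∈ T, ∀ g : M ⟶ T', ∃ h : X ⟶ T', φ ≫ h = g

/-- `φ` is a semi-special `T`-preenvelope (relative to `B`):
a `T`-preenvelope whose cokernel lies in `^{⊥₁}T` (computed in `B`). -/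
def IsSemiSpecialPreenvelopeIn (B T : Set C) {M X : C} (φ : M ⟶ X) : Prop :=
  IsPreenvelope T φ ∧ cokernel φ ∈ leftPerpSet B T

/-- `φ` is a special `T`-preenvelope (relative to `B`). -/
def IsSpecialPreenvelopeIn (B T : Set C) {M X : C} (φ : M ⟶ X) : Prop :=
  Mono φ ∧ IsSemiSpecialPreenvelopeIn B T φ

/-- `T` is preenveloping in `B`. -/
def PreenvelopingIn (B T : Set C) : Prop :=
  ∀ M ∈ B, ∃ (X : C) (φ : M ⟶ X), IsPreenvelope T φ

/-- `T` is semi-special preenveloping in `B`. -/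
def SemiSpecialPreenvelopingIn (B T : Set C) : Prop :=
  ∀ M ∈ B, ∃ (X : C) (φ : M ⟶ X), IsSemiSpecialPreenvelopeIn B T φ

/-- `T` is special preenveloping in `B`. -/
def SpecialPreenvelopingIn (B T : Set C) : Prop :=
  ∀ M ∈ B, ∃ (X : C) (φ : M ⟶ X), IsSpecialPreenvelopeIn B T φ

/-- `φ : X ⟶ M` is a `T`-precover. -/
structure IsPrecover (T : Set C) {X M : C} (φ : X ⟶ M) : Prop where
  mem : X ∈ T
  fac : ∀ T' ∈ T, ∀ g : T' ⟶ M, ∃ h : T' ⟶ X, h ≫ φ = g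

/-- `φ` is a semi-special `T`-precover (relative to `B`):
a `T`-precover whose kernel lies in `T^{⊥₁}` (computed in `B`). -/
def IsSemiSpecialPrecoverIn (B T : Set C) {X M : C} (φ : X ⟶ M) : Prop :=
  IsPrecover T φ ∧ kernel φ ∈ rightPerpSet B T

/-- `T` is precovering in `B`. -/
def PrecoveringIn (B T : Set C) : Prop :=
  ∀ M ∈ B, ∃ (X : C) (φ : X ⟶ M), IsPrecover T φ

/-- `T` is semi-special precovering in `B`. -/
def SemiSpecialPrecoveringIn (B T : Set C) : Prop :=
  ∀ M ∈ B, ∃ (X : C) (φ : X ⟶ M), IsSemiSpecialPrecoverIn B T φ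

/-- `Add(V)` relative to `B`: direct summands of coproducts (existing in `B`)
of copies of `V`. -/
def addIn (B : Set C) (V : C) : Set C :=
  {A ∈ B | ∃ (I : Type v) (Q : C) (ι : ∀ _ : I, V ⟶ Q),
     IsCoproductIn B (fun _ : I => V) Q ι ∧ ∃ (s : A ⟶ Q) (r : Q ⟶ A), s ≫ r = 𝟙 A}

/-- `Gen(V)` relative to `B`: quotients of objects of `Add(V)`. -/
def genIn (B : Set C) (V : C) : Set C :=
  {A ∈ B | ∃ X ∈ addIn B V, ∃ p : X ⟶ A, Epi p}

/-- `Pres(V)` relative to `B`: cokernels of morphisms between objects of `Add(V)`. -/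
def presIn (B : Set C) (V : C) : Set C :=
  {A ∈ B | ∃ X ∈ addIn B V, ∃ Y ∈ addIn B V,
     ∃ (f : X ⟶ Y) (c : Y ⟶ A) (hw : f ≫ c = 0), Epi c ∧ (ShortComplex.mk f c hw).Exact}

/-- `Ḡen(V) = Sub(Gen(V))` relative to `B`. -/
def barGenIn (B : Set C) (V : C) : Set C := subIn B (genIn B V)

/-- The class `X` is cogenerating in `B`. -/
def CogeneratingIn (B X : Set C) : Prop := ∀ A ∈ B, ∃ T ∈ X, ∃ f : A ⟶ T, Mono f

/-- The class `X` is generating in `B`. -/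
def GeneratingIn (B X : Set C) : Prop := ∀ A ∈ B, ∃ T ∈ X, ∃ f : T ⟶ A, Epi f

/-- `V` is a quasi-tilting object of (the full subcategory determined by) `B`:
`Gen(V)` is a torsion class and `Gen(V) = Pres(V) = Ḡen(V) ∩ V^{⊥₁}`. -/
def IsQuasiTiltingIn (B : Set C) (V : C) : Prop :=
  V ∈ B ∧ IsTorsionClassIn B (genIn B V) ∧ genIn B V = presIn B V ∧
    genIn B V = barGenIn B V ∩ rightPerp B V

/-- `V` is a tilting object of `B`: quasi-tilting with `Gen(V)` cogenerating. -/
def IsTiltingIn (B : Set C) (V : C) : Prop :=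
  IsQuasiTiltingIn B V ∧ CogeneratingIn B (genIn B V)

/-- `G` is an epi-generator of `B`: every object of `B` is an epimorphic image of a
coproduct (existing in `B`) of copies of `G`. -/
def IsEpiGeneratorIn (B : Set C) (G : C) : Prop :=
  G ∈ B ∧ ∀ A ∈ B, ∃ (I : Type v) (Q : C) (ι : ∀ _ : I, G ⟶ Q),
    IsCoproductIn B (fun _ : I => G) Q ι ∧ ∃ p : Q ⟶ A, Epi p

/-- `0 → A —u→ X → V^{(J)} → 0` is a universal extension of `V` by `A` (relative to `B`):
the right end of the sequence is a nonempty coproduct of copies of `V` existing in `B`,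
and the induced map `Ext¹(V,A) → Ext¹(V,X)` is zero (encoded: for every extension
`0 → A —i→ E → V → 0` with `E ∈ B`, its pushout along `u` splits, i.e. `u` extends
along `i`). -/
def IsUniversalExtensionIn (B : Set C) (V A X : C) (u : A ⟶ X) : Prop :=
  A ∈ B ∧ X ∈ B ∧
  (∃ (J : Type v) (_ : Nonempty J) (P : C) (κ : ∀ _ : J, V ⟶ P) (p : X ⟶ P),
     IsCoproductIn B (fun _ : J => V) P κ ∧ IsShortExact u p) ∧
  (∀ E ∈ B, ∀ (i : A ⟶ E) (q : E ⟶ V), IsShortExact i q → ∃ ψ : E ⟶ X, i ≫ ψ = u)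

/-- `V` is `Ext¹`-universal in `B`: universal extensions of `V` by every object exist. -/
def IsExt1UniversalIn (B : Set C) (V : C) : Prop :=
  ∀ A ∈ B, ∃ (X : C) (u : A ⟶ X), IsUniversalExtensionIn B V A X u

/-- `(X, Y)` is a cotorsion pair in (the full subcategory determined by) `B`. -/
def IsCotorsionPairIn (B X Y : Set C) : Prop :=
  Y = {A ∈ B | ∀ Z ∈ X, Ext1ZeroIn B Z A} ∧
  X = {A ∈ B | ∀ Z ∈ Y, Ext1ZeroIn B A Z}

/-- The pair `(X, Y)` is right complete in `B`: every `A ∈ B` admits a short exact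
sequence `0 → A → Y' → X' → 0` with `Y' ∈ Y`, `X' ∈ X`. -/
def RightCompleteIn (B X Y : Set C) : Prop :=
  ∀ A ∈ B, ∃ (Y' X' : C) (i : A ⟶ Y') (p : Y' ⟶ X'), Y' ∈ Y ∧ X' ∈ X ∧ IsShortExact i p

/-- The pair `(X, Y)` is left complete in `B`: every `A ∈ B` admits a short exact
sequence `0 → Y' → X' → A → 0` with `Y' ∈ Y`, `X' ∈ X`. -/
def LeftCompleteIn (B X Y : Set C) : Prop :=
  ∀ A ∈ B, ∃ (Y' X' : C) (i : Y' ⟶ X') (p : X' ⟶ A), Y' ∈ Y ∧ X' ∈ X ∧ IsShortExact i p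

/-- The full subcategory determined by `B` is reflective in `C`:
the (fully faithful) inclusion functor has a left adjoint. -/
def IsReflectiveSub (B : Set C) : Prop :=
  (ObjectProperty.ι (· ∈ B)).IsRightAdjoint

/-- The full subcategory determined by `B` is coreflective in `C`:
the inclusion functor has a right adjoint. -/
def IsCoreflectiveSub (B : Set C) : Prop :=
  (ObjectProperty.ι (· ∈ B)).IsLeftAdjoint

/-- `Ext²(V, A) = 0` (Yoneda `Ext²`): every `2`-fold extension
`0 → A —g→ X₁ —f→ X₀ —p→ V → 0` represents the trivial class, i.e. (by the standard
long-exact-sequence criterion) the extension `0 → A → X₁ → im f → 0` extends to an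
extension of `X₀` by `A`. -/
def Ext2Zero (V A : C) : Prop :=
  ∀ (X1 X0 : C) (g : A ⟶ X1) (f : X1 ⟶ X0) (p : X0 ⟶ V)
    (w1 : g ≫ f = 0) (w2 : f ≫ p = 0),
    Mono g → Epi p → (ShortComplex.mk g f w1).Exact → (ShortComplex.mk f p w2).Exact →
    ∃ (Y : C) (a : A ⟶ Y) (b : Y ⟶ X0), IsShortExact a b ∧
      ∃ φ : X1 ⟶ Y, g ≫ φ = a ∧ φ ≫ b = f

/-- `V` has projective dimension at most `1`: `Ext²(V, A) = 0` for every `A`. -/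
def ProjDimLE1 (V : C) : Prop := ∀ A : C, Ext2Zero V A

/-- The "elements" of the (possibly large) Yoneda `Ext¹(X, Y)`: short exact sequences
`0 → Y → E → X → 0`. -/
def ExtElem (X Y : C) : Type (max u v) :=
  Σ' (E : C) (i : Y ⟶ E) (p : E ⟶ X), IsShortExact i p

/-- Yoneda equivalence of extensions. -/
def extRel (X Y : C) : ExtElem X Y → ExtElem X Y → Prop :=
  fun e₁ e₂ => ∃ φ : e₁.1 ⟶ e₂.1, e₁.2.1 ≫ φ = e₂.2.1 ∧ φ ≫ e₂.2.2.1 = e₁.2.2.1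

/-- The (possibly large) Yoneda `Ext¹(X, Y)`, as the quotient of the collection
of extensions by Yoneda equivalence. -/
def ExtClass (X Y : C) : Type (max u v) := Quot (extRel X Y)

/-- `Ext¹(A, B)` is a finitely generated (right) `End(A)`-module: there are `n : ℕ` and a
short exact sequence `0 → B → X → A^n → 0` whose connecting map
`Hom(A, A^n) → Ext¹(A, B)` is surjective, i.e. every extension of `A` by `B` is a pullback
of the fixed one along some `h : A ⟶ A^n`. -/
def Ext1FGEnd (A B : C) : Prop :=
  ∃ (n : ℕ) (X : C) (u : B ⟶ X) (p : X ⟶ ⨁ (fun _ : Fin n => A)),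
    IsShortExact u p ∧
    ∀ (E : C) (i : B ⟶ E) (q : E ⟶ A), IsShortExact i q →
      ∃ (h : A ⟶ ⨁ (fun _ : Fin n => A)) (φ : E ⟶ X), i ≫ φ = u ∧ φ ≫ p = q ≫ h

/-- `∐¹_I f = 0`: for every `I`-indexed family of short exact sequences
`0 → Xᵢ → Yᵢ → fᵢ → 0`, the induced morphism `∐ Xᵢ → ∐ Yᵢ` between (existing)
coproducts is a monomorphism. -/
def CoprodDerivedZeroFam {I : Type v} (f : I → C) : Prop :=
  ∀ (X Y : I → C) (u : ∀ i, X i ⟶ Y i) (p : ∀ i, Y i ⟶ f i),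
    (∀ i, IsShortExact (u i) (p i)) →
    ∀ (QX QY : C) (ιX : ∀ i, X i ⟶ QX) (ιY : ∀ i, Y i ⟶ QY) (uu : QX ⟶ QY),
      IsCoproductIn Set.univ X QX ιX → IsCoproductIn Set.univ Y QY ιY →
      (∀ i, ιX i ≫ uu = u i ≫ ιY i) → Mono uu

/-- `∐¹_I V = 0` for the constant family at `V`. -/
def CoprodDerivedZero (I : Type v) (V : C) : Prop :=
  CoprodDerivedZeroFam (fun _ : I => V)

/-- Witness that the category `D` is `Hom`-finite: a commutative ring `R` together with an
`R`-linear structure on `D` for which all `Hom`-modules are finitely generated. -/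
structure HomFiniteStruct (D : Type u) [Category.{v} D] [Preadditive D] :
    Type (max u (v + 1)) where
  R : Type v
  [commRing : CommRing R]
  [linear : CategoryTheory.Linear R D]
  homFinite : ∀ A B : D, Module.Finite R (A ⟶ B)

/-- The category `D` is `Hom`-finite. -/
def HomFinite (D : Type u) [Category.{v} D] [Preadditive D] : Prop :=
  Nonempty (HomFiniteStruct D)

/-- `Q`, with injections `ι`, is a coproduct of the family `f` in an arbitrary category. -/
def IsCoproductCocone {D : Type u} [Category.{v} D] {I : Type w} (f : I → D) (Q : D)
    (ι : ∀ i, f i ⟶ Q) : Prop :=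
  ∀ (Z : D) (g : ∀ i, f i ⟶ Z), ∃! h : Q ⟶ Z, ∀ i, ι i ≫ h = g i

/-- The category `D` satisfies (Ab.4): it has all (small) coproducts, and coproducts
of monomorphisms are monomorphisms (for abelian categories, the latter is equivalent to
the exactness of coproducts). -/
def Ab4Type (D : Type u) [Category.{v} D] : Prop :=
  HasCoproducts.{v} D ∧
  ∀ (I : Type v) (X Y : I → D) (u : ∀ i, X i ⟶ Y i), (∀ i, Mono (u i)) →
    ∀ (QX QY : D) (ιX : ∀ i, X i ⟶ QX) (ιY : ∀ i, Y i ⟶ QY) (uu : QX ⟶ QY),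
      IsCoproductCocone X QX ιX → IsCoproductCocone Y QY ιY →
      (∀ i, ιX i ≫ uu = u i ≫ ιY i) → Mono uu

/-- The category `D` satisfies (Ab.5): it has all (small) coproducts and directed
(filtered) colimits of monomorphisms are monomorphisms (for abelian categories the
latter is equivalent to the exactness of directed colimits). -/
def Ab5Type (D : Type u) [Category.{v} D] : Prop :=
  HasCoproducts.{v} D ∧
  ∀ (J : Type v) [SmallCategory J] [IsFiltered J] (F G : J ⥤ D) (α : F ⟶ G),
    (∀ j, Mono (α.app j)) →
    ∀ (cF : Cocone F) (cG : Cocone G), IsColimit cF → IsColimit cG →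
      ∀ m : cF.pt ⟶ cG.pt, (∀ j, cF.ι.app j ≫ m = α.app j ≫ cG.ι.app j) → Mono m

/-- A ring `S` is left coherent: every finitely generated left ideal is finitely
presented as a left `S`-module. -/
def LeftCoherentRing (S : Type u) [Ring S] : Prop :=
  ∀ J : Submodule S S, J.FG → Module.FinitePresentation S J

/-- A ring `S` is right coherent: every finitely generated right ideal (i.e. finitely
generated left ideal of `Sᵐᵒᵖ`) is finitely presented as a right `S`-module. -/
def RightCoherentRing (S : Type u) [Ring S] : Prop :=
  ∀ J : Submodule Sᵐᵒᵖ Sᵐᵒᵖ, J.FG → Module.FinitePresentation Sᵐᵒᵖ J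

end Paper

/-!
STATEMENT 17 (Proposition `ex.reflective-versus-productclosedness`).
-/

namespace Stmt17

open Paper CategoryTheory CategoryTheory.Limits

variable {C : Type u} [Category.{v} C] [Abelian C]


private theorem key (T : Set C) (hT : PreenvelopingIn Set.univ T) (A : C) :
    ∃ (N : C) (_ : N ∈ subIn Set.univ T) (e : A ⟶ N),
      ∀ N' ∈ subIn Set.univ T, ∀ g : A ⟶ N', ∃! k : N ⟶ N', e ≫ k = g := by
  obtain ⟨X, φ, hφ⟩ := hT A trivial
  refine ⟨Abelian.image φ, ⟨trivial, X, hφ.mem, Abelian.image.ι φ, inferInstance⟩,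
    Abelian.factorThruImage φ, fun N' hN' g => ?_⟩
  obtain ⟨-, T', hT', m, hm⟩ := hN'
  obtain ⟨h, hh⟩ := hφ.fac T' hT' (g ≫ m)
  set h' : Abelian.image φ ⟶ T' := Abelian.image.ι φ ≫ h with hh'
  have hcomm : g ≫ m = Abelian.factorThruImage φ ≫ h' := by
    rw [hh', ← Category.assoc, Abelian.image.fac, hh]
  let l : A ⟶ pullback h' m := pullback.lift (Abelian.factorThruImage φ) g hcomm.symm
  have hl : l ≫ pullback.fst h' m = Abelian.factorThruImage φ := pullback.lift_fst _ _ _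
  have : Epi (l ≫ pullback.fst h' m) := hl ▸ (inferInstance : Epi (Abelian.factorThruImage φ))
  have : Epi (pullback.fst h' m) := epi_of_epi l _
  have : IsIso (pullback.fst h' m) := isIso_of_mono_of_epi _
  refine ⟨inv (pullback.fst h' m) ≫ pullback.snd h' m, ?_, ?_⟩
  · rw [← hl]
    simp only [Category.assoc, IsIso.hom_inv_id_assoc]
    exact pullback.lift_snd _ _ _
  · intro k hk
    have : Abelian.factorThruImage φ ≫ (inv (pullback.fst h' m) ≫ pullback.snd h' m) = g := by
      rw [← hl]
      simp only [Category.assoc, IsIso.hom_inv_id_assoc]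
      exact pullback.lift_snd _ _ _
    rw [← cancel_epi (Abelian.factorThruImage φ), hk, this]

theorem statement17 (T : Set C) (hT : PreenvelopingIn Set.univ T) :
    -- `Sub(𝒯)` is reflective: the inclusion functor has a left adjoint
    IsReflectiveSub (subIn Set.univ T) := by
  set G := ObjectProperty.ι (· ∈ subIn Set.univ T) with hG
  have : ∀ A : C, HasInitial (StructuredArrow A G) := by
    intro A
    obtain ⟨N, hN, e, he⟩ := key T hT A
    let e' : A ⟶ G.obj ⟨N, hN⟩ := e
    have : IsInitial (StructuredArrow.mk e') := by
      apply IsInitial.ofUniqueHom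
        (fun Y => StructuredArrow.homMk (ObjectProperty.homMk (he Y.right.obj Y.right.property Y.hom).exists.choose)
          (by exact (he Y.right.obj Y.right.property Y.hom).exists.choose_spec))
      intro Y f
      ext
      exact (he Y.right.obj Y.right.property Y.hom).unique (by exact f.w)
        (he Y.right.obj Y.right.property Y.hom).exists.choose_spec
    exact this.hasInitial
  exact isRightAdjointOfStructuredArrowInitials _

end Stmt17
end

section
/- Let 𝒜 be an (Ab.3) well-powered abelian category and ℬ a full subcategory closed under quotients. Then ℬ is coreflective in 𝒜 if and only if ℬ is closed under taking coproducts in 𝒜. In this case, denoting by σ : 𝒜 → ℬ the right adjoint of the inclusion ι : ℬ → 𝒜 and by η : ι∘σ ⇒ id_𝒜 the counit: (1) ℬ is (Ab.3) and η_X is a monomorphism for every object X; (2) if ℬ is moreover closed under taking kernels (equivalently, under subobjects), then ℬ is (Ab.4) (respectively (Ab.5), respectively a Grothendieck category) whenever 𝒜 is (Ab.4) (respectively (Ab.5), respectively Grothendieck). -/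
/-!
Common definitions for formalizing results of "Tilting preenvelopes and cotilting
precovers in general Abelian categories" (Parra–Saorín–Virili).

Conventions:
* Full subcategories of an abelian category `C` are encoded as `Set C`.
* "Sets" (index sets of families, coproducts, …) are encoded as types in the universe `v`
  of the morphisms of `C`.
* `Ext¹(X,Y) = 0` is encoded via the splitting of all short exact sequences
  `0 → Y → E → X → 0` (equivalently, the vanishing of the Yoneda Ext group).
* Relative (`…In B`) notions encode the corresponding notion computed inside the
  full (abelian exact) subcategory determined by `B : Set C`; the ambient case is
  `B = Set.univ`.
* Coproducts are not assumed to exist: a coproduct of a family existing in the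
  (sub)category is encoded by a cocone with the universal property (`IsCoproductIn`).
-/

open CategoryTheory CategoryTheory.Limits

universe w v u

attribute [local instance] CategoryTheory.Abelian.hasFiniteBiproducts

/-!
STATEMENT 18 (Proposition `prop.coreflective`).
`𝒜` is an (Ab.3), well-powered abelian category and `ℬ` a full subcategory closed under
quotients.  (Ab.4), (Ab.5) and the Grothendieck property are encoded by `Ab4Type`,
`Ab5Type` (exactness of coproducts/directed colimits = preservation of monomorphisms)
and `Ab5Type` + existence of a separator, respectively.
-/

namespace Stmt18

open Paper CategoryTheory CategoryTheory.Limits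

variable {C : Type u} [Category.{v} C] [Abelian C]

-- AUXSTART
set_option linter.unusedSectionVars false

section Aux

variable (B : Set C)

lemma mem_of_iso (hquot : ∀ ⦃A Q : C⦄, A ∈ B → ∀ p : A ⟶ Q, Epi p → Q ∈ B)
    {X Y : C} (e : X ≅ Y) (hX : X ∈ B) : Y ∈ B :=
  hquot hX e.hom inferInstance

lemma transpose_fac (σ : C ⥤ ObjectProperty.FullSubcategory (· ∈ B))
    (adj : ObjectProperty.ι (· ∈ B) ⊣ σ)
    (Y : ObjectProperty.FullSubcategory (· ∈ B)) (X : C)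
    (g : (ObjectProperty.ι (· ∈ B)).obj Y ⟶ X) :
    (ObjectProperty.ι (· ∈ B)).map (adj.homEquiv Y X g) ≫ adj.counit.app X = g := by
  exact (adj.homEquiv_counit (g := adj.homEquiv Y X g)).symm.trans
    ((adj.homEquiv Y X).symm_apply_apply g)

/-- From an adjunction, closure under ambient coproducts. -/
lemma closure_of_adj
    (hquot : ∀ ⦃A Q : C⦄, A ∈ B → ∀ p : A ⟶ Q, Epi p → Q ∈ B)
    (σ : C ⥤ ObjectProperty.FullSubcategory (· ∈ B))
    (adj : ObjectProperty.ι (· ∈ B) ⊣ σ)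
    {I : Type v} (f : I → C) (Q : C) (ι : ∀ i, f i ⟶ Q)
    (hf : ∀ i, f i ∈ B) (hQ : IsCoproductIn Set.univ f Q ι) : Q ∈ B := by
  obtain ⟨h, hh, -⟩ := hQ.desc (σ.obj Q).obj trivial
    (fun i => (ObjectProperty.ι (· ∈ B)).map
      (adj.homEquiv ⟨f i, hf i⟩ Q (show (ObjectProperty.ι (· ∈ B)).obj ⟨f i, hf i⟩ ⟶ Q from ι i)))
  have hid : h ≫ adj.counit.app Q = 𝟙 Q := by
    obtain ⟨h', -, huniq⟩ := hQ.desc Q trivial ι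
    refine (huniq _ fun i => ?_).trans (huniq (𝟙 Q) (fun i => Category.comp_id _)).symm
    rw [← Category.assoc, hh i]
    exact transpose_fac B σ adj _ _ _
  have hid' : h ≫ adj.counit.app Q = 𝟙 ((𝟭 C).obj Q) := hid
  have hepi : Epi (adj.counit.app Q) := ⟨fun u v huv => by
    rw [← Category.id_comp u, ← Category.id_comp v, ← hid', Category.assoc, Category.assoc,
      huv]⟩
  exact hquot (σ.obj Q).property (adj.counit.app Q) hepi

lemma sigma_isCoproductIn_univ {I : Type v} (f : I → C) [HasCoproduct f] :
    IsCoproductIn (Set.univ : Set C) f (∐ f) (Sigma.ι f) where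
  mem _ := trivial
  memQ := trivial
  desc Z _ g := ⟨Sigma.desc g, fun i => Sigma.ι_desc g i,
    fun h hh => Sigma.hom_ext _ _ (fun i => by rw [hh, Sigma.ι_desc])⟩

variable [HasCoproducts.{v} C]

/-- A coproduct cocone in the full subcategory is also a coproduct in the ambient category. -/
lemma isCoproductCocone_amb
    (hquot : ∀ ⦃A Q : C⦄, A ∈ B → ∀ p : A ⟶ Q, Epi p → Q ∈ B)
    (σ : C ⥤ ObjectProperty.FullSubcategory (· ∈ B))
    (adj : ObjectProperty.ι (· ∈ B) ⊣ σ)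
    {I : Type v} (f : I → ObjectProperty.FullSubcategory (· ∈ B))
    (Q : ObjectProperty.FullSubcategory (· ∈ B)) (ιf : ∀ i, f i ⟶ Q)
    (h : IsCoproductCocone f Q ιf) :
    IsCoproductCocone (fun i => (f i).obj) Q.obj
      (fun i => (ObjectProperty.ι (· ∈ B)).map (ιf i)) := by
  set F := ObjectProperty.ι (· ∈ B) with hF
  have hP : (∐ fun i => (f i).obj) ∈ B :=
    closure_of_adj B hquot σ adj _ _ _ (fun i => (f i).property)
      (sigma_isCoproductIn_univ _)
  set P : ObjectProperty.FullSubcategory (· ∈ B) := ⟨∐ fun i => (f i).obj, hP⟩ with hPdef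
  set d : P ⟶ Q := ObjectProperty.homMk (Sigma.desc (fun i => F.map (ιf i))) with hd
  obtain ⟨b, hb, -⟩ := h P
    (fun i => (show f i ⟶ P from ObjectProperty.homMk (Sigma.ι (fun i => (f i).obj) i)))
  have hba : b ≫ d = 𝟙 Q := by
    obtain ⟨c, -, hcu⟩ := h Q ιf
    refine (hcu _ fun i => ?_).trans (hcu (𝟙 Q) (fun i => Category.comp_id _)).symm
    rw [← Category.assoc, hb i, hd]
    apply ObjectProperty.hom_ext
    exact Sigma.ι_desc _ i
  intro Z g
  refine ⟨F.map b ≫ Sigma.desc g, fun i => ?_, fun k hk => ?_⟩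
  · rw [← Category.assoc, ← F.map_comp, hb i]
    exact Sigma.ι_desc g i
  · have hak : F.map d ≫ k = Sigma.desc g := by
      apply Sigma.hom_ext
      intro i
      have h1 : Sigma.ι (fun i => (f i).obj) i ≫ F.map d = F.map (ιf i) := by
        rw [hd]; exact Sigma.ι_desc _ i
      rw [Sigma.ι_desc, ← Category.assoc, h1]
      exact hk i
    calc k = 𝟙 (F.obj Q) ≫ k := (Category.id_comp k).symm
      _ = F.map (b ≫ d) ≫ k := by rw [hba, F.map_id]
      _ = F.map b ≫ Sigma.desc g := by rw [F.map_comp, Category.assoc, hak]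

/-- The full subcategory has coproducts. -/
lemma hasCoproducts_sub
    (hquot : ∀ ⦃A Q : C⦄, A ∈ B → ∀ p : A ⟶ Q, Epi p → Q ∈ B)
    (σ : C ⥤ ObjectProperty.FullSubcategory (· ∈ B))
    (adj : ObjectProperty.ι (· ∈ B) ⊣ σ) :
    HasCoproducts.{v} (ObjectProperty.FullSubcategory (· ∈ B)) := by
  intro I
  constructor
  intro G
  suffices h : HasColimit (Discrete.functor (G.obj ∘ Discrete.mk)) by
    exact hasColimit_of_iso Discrete.natIsoFunctor
  set F := ObjectProperty.ι (· ∈ B) with hF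
  set f : I → ObjectProperty.FullSubcategory (· ∈ B) := G.obj ∘ Discrete.mk with hf
  have hP : (∐ fun i => (f i).obj) ∈ B :=
    closure_of_adj B hquot σ adj _ _ _ (fun i => (f i).property)
      (sigma_isCoproductIn_univ _)
  set P : ObjectProperty.FullSubcategory (· ∈ B) := ⟨∐ fun i => (f i).obj, hP⟩ with hPdef
  refine HasColimit.mk ⟨Cofan.mk P
    (fun i => (show f i ⟶ P from ObjectProperty.homMk (Sigma.ι (fun i => (f i).obj) i))), ?_⟩
  refine mkCofanColimit _
    (fun t => (show P ⟶ t.pt from ObjectProperty.homMk (Sigma.desc (fun i => F.map (t.inj i)))))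
    (fun t j => ?_) (fun t m hm => ?_)
  · apply ObjectProperty.hom_ext
    exact Sigma.ι_desc _ j
  · apply ObjectProperty.hom_ext
    exact Sigma.hom_ext _ _ (fun i => (congrArg (fun k => k.hom) (hm i)).trans (Sigma.ι_desc (fun i => F.map (t.inj i)) i).symm)

/-- The counit is a monomorphism. -/
lemma counit_mono
    (hquot : ∀ ⦃A Q : C⦄, A ∈ B → ∀ p : A ⟶ Q, Epi p → Q ∈ B)
    (σ : C ⥤ ObjectProperty.FullSubcategory (· ∈ B))
    (adj : ObjectProperty.ι (· ∈ B) ⊣ σ) (X : C) :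
    Mono (adj.counit.app X) := by
  have himg : image (adj.counit.app X) ∈ B :=
    hquot (σ.obj X).property (factorThruImage (adj.counit.app X)) inferInstance
  set gB : (⟨image (adj.counit.app X), himg⟩ : ObjectProperty.FullSubcategory (· ∈ B)) ⟶ σ.obj X :=
    adj.homEquiv ⟨image (adj.counit.app X), himg⟩ X
      (show (ObjectProperty.ι (· ∈ B)).obj ⟨image (adj.counit.app X), himg⟩ ⟶ X from
        image.ι (adj.counit.app X)) with hgB
  have h1 : (ObjectProperty.ι (· ∈ B)).map gB ≫ adj.counit.app X
      = image.ι (adj.counit.app X) := transpose_fac B σ adj _ _ _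
  have h2B : (show σ.obj X ⟶ (⟨image (adj.counit.app X), himg⟩ : ObjectProperty.FullSubcategory (· ∈ B)) from
      ObjectProperty.homMk (factorThruImage (adj.counit.app X))) ≫ gB = 𝟙 (σ.obj X) := by
    have e1 : (adj.homEquiv (σ.obj X) X).symm
        ((show σ.obj X ⟶ (⟨image (adj.counit.app X), himg⟩ : ObjectProperty.FullSubcategory (· ∈ B)) from
          ObjectProperty.homMk (factorThruImage (adj.counit.app X))) ≫ gB)
        = (adj.homEquiv (σ.obj X) X).symm (𝟙 (σ.obj X)) := by
      rw [adj.homEquiv_counit, adj.homEquiv_counit]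
      show (factorThruImage (adj.counit.app X) ≫
          (ObjectProperty.ι (· ∈ B)).map gB) ≫ adj.counit.app X
        = 𝟙 ((σ.obj X).obj) ≫ adj.counit.app X
      rw [Category.assoc, h1, image.fac, Category.id_comp]
    exact (adj.homEquiv (σ.obj X) X).symm.injective e1
  have h2 : factorThruImage (adj.counit.app X) ≫ (ObjectProperty.ι (· ∈ B)).map gB
      = 𝟙 ((σ.obj X).obj) := congrArg (fun k => k.hom) h2B
  have h3 : (ObjectProperty.ι (· ∈ B)).map gB ≫ factorThruImage (adj.counit.app X)
      = 𝟙 (image (adj.counit.app X)) := by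
    have he : Epi (factorThruImage (adj.counit.app X)) := inferInstance
    apply he.left_cancellation
    rw [← Category.assoc, h2]
    exact (Category.id_comp _).trans (Category.comp_id _).symm
  haveI hiso : IsIso (factorThruImage (adj.counit.app X)) :=
    ⟨(ObjectProperty.ι (· ∈ B)).map gB, h2, h3⟩
  have h4 : factorThruImage (adj.counit.app X) ≫ image.ι (adj.counit.app X)
      = adj.counit.app X := image.fac _
  rw [← h4]
  exact mono_comp _ _

/-- Monos in the full subcategory are monos in the ambient category
(uses closure under kernels). -/
lemma mono_amb
    (hker : ∀ ⦃A A' : C⦄ (f : A ⟶ A'), A ∈ B → A' ∈ B → kernel f ∈ B)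
    {A A' : ObjectProperty.FullSubcategory (· ∈ B)} (φ : A ⟶ A') (hm : Mono φ) :
    Mono ((ObjectProperty.ι (· ∈ B)).map φ) := by
  set F := ObjectProperty.ι (· ∈ B) with hF
  apply Abelian.mono_of_kernel_ι_eq_zero
  set K : ObjectProperty.FullSubcategory (· ∈ B) :=
    ⟨kernel (F.map φ), hker (F.map φ) A.property A'.property⟩ with hK
  have h0 : (show K ⟶ A from ObjectProperty.homMk (kernel.ι (F.map φ))) ≫ φ
      = (show K ⟶ A from ObjectProperty.homMk (0 : kernel (F.map φ) ⟶ A.obj)) ≫ φ := by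
    apply ObjectProperty.hom_ext
    show kernel.ι (F.map φ) ≫ F.map φ = (0 : kernel (F.map φ) ⟶ A.obj) ≫ F.map φ
    rw [kernel.condition, zero_comp]
  exact congrArg (fun k => k.hom) (hm.right_cancellation _ _ h0)

lemma mono_sub {A A' : ObjectProperty.FullSubcategory (· ∈ B)} (φ : A ⟶ A')
    (h : Mono ((ObjectProperty.ι (· ∈ B)).map φ)) : Mono φ :=
  ⟨fun g h' e => by
    apply ObjectProperty.hom_ext
    exact h.right_cancellation g.hom h'.hom (congrArg (fun k => k.hom) e)⟩

/-- Closure under subobjects from closure under quotients and kernels. -/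
lemma mem_of_mono
    (hquot : ∀ ⦃A Q : C⦄, A ∈ B → ∀ p : A ⟶ Q, Epi p → Q ∈ B)
    (hker : ∀ ⦃A A' : C⦄ (f : A ⟶ A'), A ∈ B → A' ∈ B → kernel f ∈ B)
    {U V : C} (m : U ⟶ V) [Mono m] (hV : V ∈ B) : U ∈ B := by
  have h1 : cokernel m ∈ B := hquot hV (cokernel.π m) inferInstance
  have h2 : kernel (cokernel.π m) ∈ B := hker _ hV h1
  have e : U ≅ kernel (cokernel.π m) :=
    (imageMonoIsoSource m).symm ≪≫ (Abelian.imageIsoImage m).symm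
  exact mem_of_iso B hquot e.symm h2

end Aux
-- AUXEND

-- TRSTART
section Trace

variable (B : Set C) [HasCoproducts.{v} C] [WellPowered.{v} C]

/-- The `v`-small index type of subobjects of `X` lying in `B`. -/
abbrev trIdx (X : C) : Type v := Shrink.{v} {P : Subobject X // (P : C) ∈ B}

/-- The family of subobjects of `X` lying in `B`. -/
noncomputable abbrev trFam (X : C) (i : trIdx B X) : C :=
  ((((equivShrink.{v} {P : Subobject X // (P : C) ∈ B}).symm i).1 : C))

lemma trFam_mem (X : C) (i : trIdx B X) : trFam B X i ∈ B :=
  ((equivShrink.{v} {P : Subobject X // (P : C) ∈ B}).symm i).2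

/-- The canonical map from the coproduct of all subobjects of `X` lying in `B`. -/
noncomputable def trD (X : C) : (∐ trFam B X) ⟶ X :=
  Sigma.desc (fun i => (((equivShrink.{v} {P : Subobject X // (P : C) ∈ B}).symm i).1).arrow)

lemma trD_ι (X : C) (i : trIdx B X) :
    Sigma.ι (trFam B X) i ≫ trD B X
      = (((equivShrink.{v} {P : Subobject X // (P : C) ∈ B}).symm i).1).arrow :=
  Sigma.ι_desc _ i

/-- The trace of `B` in `X`. -/
noncomputable abbrev trObj (X : C) : C := image (trD B X)

/-- The inclusion of the trace. -/
noncomputable def trι (X : C) : trObj B X ⟶ X := image.ι (trD B X)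

instance (X : C) : Mono (trι B X) := inferInstanceAs (Mono (image.ι (trD B X)))

lemma trObj_mem (hquot : ∀ ⦃A Q : C⦄, A ∈ B → ∀ p : A ⟶ Q, Epi p → Q ∈ B)
    (hclos : ∀ (I : Type v) (f : I → C) (Q : C) (ι : ∀ i, f i ⟶ Q),
    (∀ i, f i ∈ B) → IsCoproductIn Set.univ f Q ι → Q ∈ B) (X : C) : trObj B X ∈ B := by
  have h1 : (∐ trFam B X) ∈ B :=
    hclos _ _ _ _ (trFam_mem B X) (sigma_isCoproductIn_univ _)
  exact hquot h1 (factorThruImage (trD B X)) inferInstance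

lemma arrow_eqToHom {X : C} {P Q : Subobject X} (h : P = Q) :
    eqToHom (congrArg (fun R : Subobject X => (R : C)) h) ≫ Q.arrow = P.arrow := by
  subst h; simp

/-- Every map from an object of `B` factors through the trace. -/
lemma tr_lift (hquot : ∀ ⦃A Q : C⦄, A ∈ B → ∀ p : A ⟶ Q, Epi p → Q ∈ B) {Y X : C} (hY : Y ∈ B) (g : Y ⟶ X) :
    ∃ h : Y ⟶ trObj B X, h ≫ trι B X = g := by
  have himg : image g ∈ B := hquot hY (factorThruImage g) inferInstance
  have hmk : ((Subobject.mk (image.ι g) : Subobject X) : C) ∈ B :=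
    mem_of_iso B hquot (Subobject.underlyingIso (image.ι g)).symm himg
  set x : {P : Subobject X // (P : C) ∈ B} := ⟨Subobject.mk (image.ι g), hmk⟩ with hx
  set i₀ : trIdx B X := equivShrink.{v} {P : Subobject X // (P : C) ∈ B} x with hi₀
  have heq : ((equivShrink.{v} {P : Subobject X // (P : C) ∈ B}).symm i₀).1 = x.1 :=
    congrArg Subtype.val (Equiv.symm_apply_apply _ x)
  refine ⟨factorThruImage g ≫ (Subobject.underlyingIso (image.ι g)).inv ≫
    eqToHom (congrArg (fun R : Subobject X => (R : C)) heq.symm) ≫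
    Sigma.ι (trFam B X) i₀ ≫ factorThruImage (trD B X), ?_⟩
  have h5 : factorThruImage (trD B X) ≫ trι B X = trD B X := image.fac _
  rw [Category.assoc, Category.assoc, Category.assoc, Category.assoc, h5, trD_ι,
    arrow_eqToHom heq.symm]
  have h6 : (Subobject.underlyingIso (image.ι g)).inv ≫ x.1.arrow = image.ι g :=
    Subobject.underlyingIso_arrow (image.ι g)
  rw [h6, image.fac]

lemma tr_lift_unique {Y X : C} (g : Y ⟶ X) (h1 h2 : Y ⟶ trObj B X)
    (e1 : h1 ≫ trι B X = g) (e2 : h2 ≫ trι B X = g) : h1 = h2 := by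
  have : Mono (trι B X) := inferInstance
  exact this.right_cancellation _ _ (e1.trans e2.symm)

/-- Functorial action of the trace. -/
noncomputable def trMap (hquot : ∀ ⦃A Q : C⦄, A ∈ B → ∀ p : A ⟶ Q, Epi p → Q ∈ B)
    (hclos : ∀ (I : Type v) (f : I → C) (Q : C) (ι : ∀ i, f i ⟶ Q),
    (∀ i, f i ∈ B) → IsCoproductIn Set.univ f Q ι → Q ∈ B) {X Y : C} (f : X ⟶ Y) : trObj B X ⟶ trObj B Y :=
  (tr_lift B hquot (trObj_mem B hquot hclos X) (trι B X ≫ f)).choose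

lemma trMap_fac (hquot : ∀ ⦃A Q : C⦄, A ∈ B → ∀ p : A ⟶ Q, Epi p → Q ∈ B)
    (hclos : ∀ (I : Type v) (f : I → C) (Q : C) (ι : ∀ i, f i ⟶ Q),
    (∀ i, f i ∈ B) → IsCoproductIn Set.univ f Q ι → Q ∈ B) {X Y : C} (f : X ⟶ Y) :
    trMap B hquot hclos f ≫ trι B Y = trι B X ≫ f :=
  (tr_lift B hquot (trObj_mem B hquot hclos X) (trι B X ≫ f)).choose_spec

lemma trMap_id (hquot : ∀ ⦃A Q : C⦄, A ∈ B → ∀ p : A ⟶ Q, Epi p → Q ∈ B)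
    (hclos : ∀ (I : Type v) (f : I → C) (Q : C) (ι : ∀ i, f i ⟶ Q),
    (∀ i, f i ∈ B) → IsCoproductIn Set.univ f Q ι → Q ∈ B) (X : C) : trMap B hquot hclos (𝟙 X) = 𝟙 (trObj B X) :=
  tr_lift_unique B (trι B X ≫ 𝟙 X) _ _ (trMap_fac B hquot hclos (𝟙 X))
    (by rw [Category.id_comp, Category.comp_id])

lemma trMap_comp (hquot : ∀ ⦃A Q : C⦄, A ∈ B → ∀ p : A ⟶ Q, Epi p → Q ∈ B)
    (hclos : ∀ (I : Type v) (f : I → C) (Q : C) (ι : ∀ i, f i ⟶ Q),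
    (∀ i, f i ∈ B) → IsCoproductIn Set.univ f Q ι → Q ∈ B) {X Y Z : C} (f : X ⟶ Y) (g : Y ⟶ Z) :
    trMap B hquot hclos (f ≫ g) = trMap B hquot hclos f ≫ trMap B hquot hclos g :=
  tr_lift_unique B (trι B X ≫ f ≫ g) _ _ (trMap_fac B hquot hclos (f ≫ g))
    (by rw [Category.assoc, trMap_fac, ← Category.assoc, trMap_fac, Category.assoc])

/-- The coreflector. -/
noncomputable def trFun (hquot : ∀ ⦃A Q : C⦄, A ∈ B → ∀ p : A ⟶ Q, Epi p → Q ∈ B)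
    (hclos : ∀ (I : Type v) (f : I → C) (Q : C) (ι : ∀ i, f i ⟶ Q),
    (∀ i, f i ∈ B) → IsCoproductIn Set.univ f Q ι → Q ∈ B) : C ⥤ ObjectProperty.FullSubcategory (· ∈ B) where
  obj X := ⟨trObj B X, trObj_mem B hquot hclos X⟩
  map f := ObjectProperty.homMk (trMap B hquot hclos f)
  map_id X := by
    apply ObjectProperty.hom_ext
    exact trMap_id B hquot hclos X
  map_comp f g := by
    apply ObjectProperty.hom_ext
    exact trMap_comp B hquot hclos f g

/-- The coreflection adjunction. -/
noncomputable def trAdj (hquot : ∀ ⦃A Q : C⦄, A ∈ B → ∀ p : A ⟶ Q, Epi p → Q ∈ B)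
    (hclos : ∀ (I : Type v) (f : I → C) (Q : C) (ι : ∀ i, f i ⟶ Q),
    (∀ i, f i ∈ B) → IsCoproductIn Set.univ f Q ι → Q ∈ B) : ObjectProperty.ι (· ∈ B) ⊣ trFun B hquot hclos :=
  Adjunction.mkOfHomEquiv
  { homEquiv := fun Y X =>
    { toFun := fun g => show Y ⟶ (trFun B hquot hclos).obj X from
        ObjectProperty.homMk (tr_lift B hquot Y.property g).choose
      invFun := fun h => (ObjectProperty.ι (· ∈ B)).map h ≫ trι B X
      left_inv := fun g => (tr_lift B hquot Y.property g).choose_spec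
      right_inv := fun h => by
        apply ObjectProperty.hom_ext
        exact tr_lift_unique B
          ((ObjectProperty.ι (· ∈ B)).map h ≫ trι B X) _ _
          (tr_lift B hquot Y.property _).choose_spec rfl }
    homEquiv_naturality_left_symm := fun f g => by
      show (ObjectProperty.ι (· ∈ B)).map (f ≫ g) ≫ trι B _
        = (ObjectProperty.ι (· ∈ B)).map f ≫
          ((ObjectProperty.ι (· ∈ B)).map g ≫ trι B _)
      exact Category.assoc _ _ _
    homEquiv_naturality_right := fun {Y X X'} g f => by
      apply ObjectProperty.hom_ext
      refine tr_lift_unique B (g ≫ f) _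
        ((tr_lift B hquot Y.property g).choose ≫ trMap B hquot hclos f)
        (tr_lift B hquot Y.property (g ≫ f)).choose_spec ?_
      rw [Category.assoc, trMap_fac, ← Category.assoc,
        (tr_lift B hquot Y.property g).choose_spec] }

end Trace
-- TREND

-- SEPSTART
section Sep

variable (B : Set C) [HasCoproducts.{v} C] [WellPowered.{v} C]

/-- Transfer of separators to the coreflective subcategory. -/
lemma separator_sub
    (hquot : ∀ ⦃A Q : C⦄, A ∈ B → ∀ p : A ⟶ Q, Epi p → Q ∈ B)
    (hker : ∀ ⦃A A' : C⦄ (f : A ⟶ A'), A ∈ B → A' ∈ B → kernel f ∈ B)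
    (σ : C ⥤ ObjectProperty.FullSubcategory (· ∈ B))
    (adj : ObjectProperty.ι (· ∈ B) ⊣ σ)
    (G : C) (hG : IsSeparator G) :
    ∃ G' : ObjectProperty.FullSubcategory (· ∈ B), IsSeparator G' := by
  classical
  set fam : Shrink.{v} {P : Subobject G // cokernel P.arrow ∈ B} → C := fun i =>
    cokernel (((equivShrink.{v} {P : Subobject G // cokernel P.arrow ∈ B}).symm i).1).arrow
    with hfam
  have hfammem : ∀ i, fam i ∈ B := fun i => ((equivShrink.{v} _).symm i).2
  have hQ : (∐ fam) ∈ B :=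
    closure_of_adj B hquot σ adj _ _ _ hfammem (sigma_isCoproductIn_univ _)
  refine ⟨⟨∐ fam, hQ⟩, ?_⟩
  rw [isSeparator_def]
  intro A A' f g hfg
  have key : ∀ h : G ⟶ A.obj,
      h ≫ (ObjectProperty.ι (· ∈ B)).map f
        = h ≫ (ObjectProperty.ι (· ∈ B)).map g := by
    intro h
    have hco : Abelian.coimage h ∈ B :=
      mem_of_mono B hquot hker (Abelian.factorThruCoimage h) A.property
    have harr : (Subobject.underlyingIso (kernel.ι h)).hom ≫ kernel.ι h
        = (Subobject.mk (kernel.ι h)).arrow :=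
      Subobject.underlyingIso_hom_comp_eq_mk _
    have isoC : cokernel (Subobject.mk (kernel.ι h)).arrow ≅ Abelian.coimage h :=
      (cokernelIsoOfEq harr.symm) ≪≫
        cokernelEpiComp (Subobject.underlyingIso (kernel.ι h)).hom (kernel.ι h)
    have hmkmem : cokernel (Subobject.mk (kernel.ι h)).arrow ∈ B :=
      mem_of_iso B hquot isoC.symm hco
    have heq : ((equivShrink.{v} {P : Subobject G // cokernel P.arrow ∈ B}).symm
        (equivShrink.{v} _ (⟨Subobject.mk (kernel.ι h), hmkmem⟩ :
          {P : Subobject G // cokernel P.arrow ∈ B})))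
        = ⟨Subobject.mk (kernel.ι h), hmkmem⟩ :=
      Equiv.symm_apply_apply _ _
    set i₀ := equivShrink.{v} {P : Subobject G // cokernel P.arrow ∈ B}
      ⟨Subobject.mk (kernel.ι h), hmkmem⟩ with hi₀
    have hcast : fam i₀ = cokernel (Subobject.mk (kernel.ι h)).arrow :=
      congrArg (fun y : {P : Subobject G // cokernel P.arrow ∈ B} =>
        cokernel y.1.arrow) heq
    set q : fam i₀ ⟶ A.obj :=
      eqToHom hcast ≫ isoC.hom ≫ Abelian.factorThruCoimage h with hq
    set k : ∀ i, fam i ⟶ A.obj :=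
      fun i => if hi : i = i₀ then eqToHom (congrArg fam hi) ≫ q else 0 with hk
    have h7 : Sigma.ι fam i₀ ≫ Sigma.desc k = q := by
      rw [Sigma.ι_desc, hk]
      simp
    have hH : Sigma.desc k ≫ (ObjectProperty.ι (· ∈ B)).map f
        = Sigma.desc k ≫ (ObjectProperty.ι (· ∈ B)).map g :=
      hfg (show (⟨∐ fam, hQ⟩ : ObjectProperty.FullSubcategory (· ∈ B)) ⟶ A from ObjectProperty.homMk (Sigma.desc k)) |> congrArg (fun k => k.hom)
    have h9 : q ≫ (ObjectProperty.ι (· ∈ B)).map f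
        = q ≫ (ObjectProperty.ι (· ∈ B)).map g := by
      rw [← h7, Category.assoc, Category.assoc, hH]
    have h11 : Abelian.factorThruCoimage h = isoC.inv ≫ eqToHom hcast.symm ≫ q := by
      rw [hq]
      simp
    calc h ≫ (ObjectProperty.ι (· ∈ B)).map f
        = (Abelian.coimage.π h ≫ Abelian.factorThruCoimage h) ≫
            (ObjectProperty.ι (· ∈ B)).map f := by rw [Abelian.coimage.fac]
      _ = Abelian.coimage.π h ≫ isoC.inv ≫ eqToHom hcast.symm ≫
            (q ≫ (ObjectProperty.ι (· ∈ B)).map f) := by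
          rw [h11]; simp only [Category.assoc]
      _ = Abelian.coimage.π h ≫ isoC.inv ≫ eqToHom hcast.symm ≫
            (q ≫ (ObjectProperty.ι (· ∈ B)).map g) := by rw [h9]
      _ = (Abelian.coimage.π h ≫ Abelian.factorThruCoimage h) ≫
            (ObjectProperty.ι (· ∈ B)).map g := by
          rw [h11]; simp only [Category.assoc]
      _ = h ≫ (ObjectProperty.ι (· ∈ B)).map g := by rw [Abelian.coimage.fac]
  apply ObjectProperty.hom_ext
  exact (isSeparator_def G).1 hG _ _ key

end Sep
-- SEPEND

theorem statement18 [HasCoproducts.{v} C] [WellPowered.{v} C] (B : Set C)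
    (hquot : ∀ ⦃A Q : C⦄, A ∈ B → ∀ p : A ⟶ Q, Epi p → Q ∈ B) :
    -- `ℬ` is coreflective iff it is closed under the coproducts of `𝒜`:
    (IsCoreflectiveSub B ↔
      ∀ (I : Type v) (f : I → C) (Q : C) (ι : ∀ i, f i ⟶ Q),
        (∀ i, f i ∈ B) → IsCoproductIn Set.univ f Q ι → Q ∈ B) ∧
    -- In that case, for every right adjoint `σ` of the inclusion with counit `η`:
    (∀ (σ : C ⥤ ObjectProperty.FullSubcategory (· ∈ B))
       (adj : ObjectProperty.ι (· ∈ B) ⊣ σ),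
      -- (1) `ℬ` is (Ab.3) and the counit is monomorphic:
      (HasCoproducts.{v} (ObjectProperty.FullSubcategory (· ∈ B)) ∧
        ∀ X : C, Mono (adj.counit.app X)) ∧
      -- (2) if `ℬ` is moreover closed under kernels:
      ((∀ ⦃A A' : C⦄ (f : A ⟶ A'), A ∈ B → A' ∈ B → Limits.kernel f ∈ B) →
        ((Ab4Type C → Ab4Type (ObjectProperty.FullSubcategory (· ∈ B))) ∧
         (Ab5Type C → Ab5Type (ObjectProperty.FullSubcategory (· ∈ B))) ∧
         ((Ab5Type C ∧ ∃ G : C, IsSeparator G) →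
           (Ab5Type (ObjectProperty.FullSubcategory (· ∈ B)) ∧
             ∃ G' : ObjectProperty.FullSubcategory (· ∈ B), IsSeparator G'))))) := by
  constructor
  · constructor
    · rintro ⟨σ, ⟨adj⟩⟩ I f Q ι hf hQ
      exact closure_of_adj B hquot σ adj f Q ι hf hQ
    · intro hclos
      exact ⟨trFun B hquot hclos, ⟨trAdj B hquot hclos⟩⟩
  · intro σ adj
    refine ⟨⟨hasCoproducts_sub B hquot σ adj, counit_mono B hquot σ adj⟩, ?_⟩
    intro hker
    have hab5 : Ab5Type C → Ab5Type (ObjectProperty.FullSubcategory (· ∈ B)) := by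
      intro hC
      refine ⟨hasCoproducts_sub B hquot σ adj, ?_⟩
      intro J _ _ Fj Gj α hα cF cG hcF hcG m hm
      haveI : PreservesColimitsOfSize.{v, v}
          (ObjectProperty.ι (· ∈ B)) := adj.leftAdjoint_preservesColimits
      have hcF' := isColimitOfPreserves (ObjectProperty.ι (· ∈ B)) hcF
      have hcG' := isColimitOfPreserves (ObjectProperty.ι (· ∈ B)) hcG
      have hmono : Mono ((ObjectProperty.ι (· ∈ B)).map m) := by
        refine hC.2 J (Fj ⋙ ObjectProperty.ι (· ∈ B))
          (Gj ⋙ ObjectProperty.ι (· ∈ B))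
          (Functor.whiskerRight α (ObjectProperty.ι (· ∈ B)))
          (fun j => mono_amb B hker (α.app j) (hα j))
          _ _ hcF' hcG' ((ObjectProperty.ι (· ∈ B)).map m) (fun j => ?_)
        show (ObjectProperty.ι (· ∈ B)).map (cF.ι.app j) ≫
            (ObjectProperty.ι (· ∈ B)).map m
          = (ObjectProperty.ι (· ∈ B)).map (α.app j) ≫
            (ObjectProperty.ι (· ∈ B)).map (cG.ι.app j)
        rw [← Functor.map_comp, ← Functor.map_comp, hm j]
      exact mono_sub B m hmono
    refine ⟨?_, hab5, ?_⟩
    · intro hC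
      refine ⟨hasCoproducts_sub B hquot σ adj, ?_⟩
      intro I X Y u hu QX QY ιX ιY uu hX hY hcomm
      have hmono : Mono ((ObjectProperty.ι (· ∈ B)).map uu) := by
        refine hC.2 I (fun i => (X i).obj) (fun i => (Y i).obj)
          (fun i => (ObjectProperty.ι (· ∈ B)).map (u i))
          (fun i => mono_amb B hker (u i) (hu i))
          QX.obj QY.obj
          (fun i => (ObjectProperty.ι (· ∈ B)).map (ιX i))
          (fun i => (ObjectProperty.ι (· ∈ B)).map (ιY i))
          ((ObjectProperty.ι (· ∈ B)).map uu)
          (isCoproductCocone_amb B hquot σ adj X QX ιX hX)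
          (isCoproductCocone_amb B hquot σ adj Y QY ιY hY)
          (fun i => ?_)
        rw [← Functor.map_comp, ← Functor.map_comp, hcomm i]
      exact mono_sub B uu hmono
    · rintro ⟨hC5, G, hG⟩
      exact ⟨hab5 hC5, separator_sub B hquot hker σ adj G hG⟩

end Stmt18
end
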